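/- Let W be a nonnegative random variable with density f_W satisfying f_W(w) ≥ g_min·e^{−θ* w} for all w ≥ 0, where g_min, θ* > 0. Let X, Y be nonnegative random variables and A ~ Exp(λ), all mutually independent and independent of W. Then P(A + (t − X − Y)⁺ ≤ W ≤ A + (t − X)⁺) ≥ (g_min·(λ/(λ+θ*))·e^{−θ* t}/θ*)·E[e^{θ* min(t, X+Y)} − e^{θ* min(t, X)}] for every t ≥ 0. -/

import Mathlib

open scoped NNReal ENNReal
open MeasureTheory ProbabilityTheory Set

lemma aux_exp_Ioi {c : ℝ} (hc : 0 < c) : ∫ x in Ioi (0:ℝ), Real.exp (-(c*x)) = 1/c := by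
  have h := integral_comp_mul_left_Ioi (fun x => Real.exp (-x)) 0 hc
  simp only [mul_zero, integral_exp_neg_Ioi, neg_zero, Real.exp_zero, smul_eq_mul, mul_one] at h
  simpa [one_div] using h

lemma aux_exp_Icc {θ : ℝ} (hθ : 0 < θ) {l u : ℝ} (hlu : l ≤ u) :
    ∫ w in Icc l u, Real.exp (-(θ * w)) =
      (Real.exp (-(θ*l)) - Real.exp (-(θ*u)))/θ := by
  rw [integral_Icc_eq_integral_Ioc, ← intervalIntegral.integral_of_le hlu]
  have hderiv : ∀ x ∈ uIcc l u, HasDerivAt (fun a => -Real.exp (-(θ*a)) / θ)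
      (Real.exp (-(θ * x))) x := by
    intro x _
    have h := (ProbabilityTheory.hasDerivAt_neg_exp_mul_exp (r := θ) (x := x)).div_const θ
    simpa [mul_div_assoc, mul_div_cancel_left₀ _ hθ.ne'] using h
  rw [intervalIntegral.integral_eq_sub_of_hasDerivAt hderiv (by
    apply Continuous.intervalIntegrable; continuity)]
  ring

lemma exponentialPDFReal_eq' (r x : ℝ) :
    exponentialPDFReal r x = if 0 ≤ x then r * Real.exp (-(r * x)) else 0 := by
  rw [exponentialPDFReal, gammaPDFReal]
  simp only [Real.rpow_one, Real.Gamma_one, div_one, sub_self, Real.rpow_zero, mul_one]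

lemma exp_moment {lam θ : ℝ} (hlam : 0 < lam) (hθ : 0 < θ) :
    ∫ a, Real.exp (-(θ*a)) ∂(expMeasure lam) = lam/(lam+θ) := by
  have hmeas : Measurable (fun a => Real.toNNReal (exponentialPDFReal lam a)) :=
    (measurable_exponentialPDFReal lam).real_toNNReal
  have h0 : expMeasure lam =
      MeasureTheory.volume.withDensity
        (fun a => ((Real.toNNReal (exponentialPDFReal lam a) : ℝ≥0) : ℝ≥0∞)) := rfl
  rw [h0, integral_withDensity_eq_integral_smul hmeas]
  have h1 : (fun a => (Real.toNNReal (exponentialPDFReal lam a) : ℝ≥0) • Real.exp (-(θ*a)))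
      = Set.indicator (Ici (0:ℝ)) (fun a => lam * Real.exp (-((lam+θ) * a))) := by
    funext a
    rw [NNReal.smul_def, Real.coe_toNNReal _ (exponentialPDFReal_nonneg hlam a)]
    rw [exponentialPDFReal_eq']
    by_cases h : 0 ≤ a
    · rw [if_pos h, Set.indicator_of_mem (mem_Ici.mpr h)]
      rw [smul_eq_mul, mul_assoc, ← Real.exp_add]
      ring_nf
    · rw [if_neg h, Set.indicator_of_notMem (by simpa using h), zero_smul]
  rw [h1, integral_indicator measurableSet_Ici, integral_Ici_eq_integral_Ioi,
    MeasureTheory.integral_const_mul, aux_exp_Ioi (by linarith)]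
  field_simp

lemma withDensity_Icc_lower {fW : ℝ → ℝ} {gmin θ : ℝ} (hgmin : 0 ≤ gmin) (hθ : 0 < θ)
    (hfW_bound : ∀ w ≥ 0, gmin * Real.exp (-(θ * w)) ≤ fW w)
    {l u : ℝ} (hl : 0 ≤ l) (hlu : l ≤ u) :
    ENNReal.ofReal (gmin/θ * (Real.exp (-(θ*l)) - Real.exp (-(θ*u)))) ≤
      MeasureTheory.volume.withDensity (fun w => ENNReal.ofReal (fW w)) (Icc l u) := by
  set f0 : ℝ → ℝ≥0∞ :=
    fun w => ENNReal.ofReal ((Ici (0:ℝ)).indicator (fun w => gmin * Real.exp (-(θ*w))) w) with hf0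
  have hle : ∀ w, f0 w ≤ ENNReal.ofReal (fW w) := by
    intro w
    by_cases h : (0:ℝ) ≤ w
    · rw [hf0]; simp only [Set.indicator_of_mem (mem_Ici.mpr h)]
      exact ENNReal.ofReal_le_ofReal (hfW_bound w h)
    · rw [hf0]; simp only [Set.indicator_of_notMem (fun hc => h (mem_Ici.mp hc)),
        ENNReal.ofReal_zero]; exact zero_le
  have hmono : MeasureTheory.volume.withDensity f0 ≤
      MeasureTheory.volume.withDensity (fun w => ENNReal.ofReal (fW w)) :=
    withDensity_mono (Filter.Eventually.of_forall hle)
  refine le_trans (le_of_eq ?_) (hmono (Icc l u))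
  rw [withDensity_apply _ measurableSet_Icc]
  have hcongr : ∫⁻ w in Icc l u, f0 w =
      ∫⁻ w in Icc l u, ENNReal.ofReal (gmin * Real.exp (-(θ*w))) := by
    refine setLIntegral_congr_fun_ae measurableSet_Icc (Filter.Eventually.of_forall fun w hw => ?_)
    exact congrArg ENNReal.ofReal (Set.indicator_of_mem (mem_Ici.mpr (hl.trans hw.1)) _)
  rw [hcongr, ← ofReal_integral_eq_lintegral_ofReal
    (((by fun_prop : Continuous (fun w : ℝ => gmin * Real.exp (-(θ*w)))).integrableOn_Icc))
    (Filter.Eventually.of_forall fun w => mul_nonneg hgmin (Real.exp_nonneg _)),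
    MeasureTheory.integral_const_mul, aux_exp_Icc hθ hlu]
  congr 1
  ring

lemma iIndepFun_ae_congr {Ω ι : Type*} [MeasurableSpace Ω] {μ : Measure Ω}
    {β : ι → Type*} [m : ∀ i, MeasurableSpace (β i)] {f g : ∀ i, Ω → β i}
    (h : iIndepFun f μ) (hfg : ∀ i, f i =ᵐ[μ] g i) : iIndepFun g μ := by
  rw [iIndepFun_iff_measure_inter_preimage_eq_mul] at h ⊢
  intro S sets H
  have hpre : ∀ i, (g i ⁻¹' sets i) =ᵐ[μ] (f i ⁻¹' sets i) := fun i =>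
    Filter.eventuallyEq_set.2 ((hfg i).mono fun ω hω => by simp [Set.mem_preimage, hω])
  have hint : (⋂ i ∈ S, g i ⁻¹' sets i) =ᵐ[μ] (⋂ i ∈ S, f i ⁻¹' sets i) := by
    have hall : ∀ᵐ ω ∂μ, ∀ i ∈ S, f i ω = g i ω :=
      (Filter.eventually_all_finset S).2 fun i _ => hfg i
    refine Filter.eventuallyEq_set.2 (hall.mono fun ω hω => ?_)
    simp only [Set.mem_iInter, Set.mem_preimage]
    exact ⟨fun h' i hi => (hω i hi) ▸ h' i hi, fun h' i hi => (hω i hi).symm ▸ h' i hi⟩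
  rw [measure_congr hint, h S H]
  exact Finset.prod_congr rfl fun i hi => (measure_congr (hpre i)).symm

theorem decrease_prob_lower_bound {Ω : Type*} [MeasurableSpace Ω] (μ : Measure Ω)
    [IsProbabilityMeasure μ] (W X Y A : Ω → ℝ) (fW : ℝ → ℝ) (gmin θ lam : ℝ)
    (hgmin : 0 < gmin) (hθ : 0 < θ) (hlam : 0 < lam)
    (hW : Measurable W) (hX : Measurable X) (hY : Measurable Y)
    (hXpos : ∀ᵐ ω ∂μ, 0 ≤ X ω) (hYpos : ∀ᵐ ω ∂μ, 0 ≤ Y ω)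
    (hdensity : Measure.map W μ =
      MeasureTheory.volume.withDensity (fun w => ENNReal.ofReal (fW w)))
    (hfW_neg : ∀ w < 0, fW w = 0)
    (hfW_bound : ∀ w ≥ 0, gmin * Real.exp (-(θ * w)) ≤ fW w)
    (hA : Measure.map A μ = expMeasure lam)
    (hindep : iIndepFun ![W, X, Y, A] μ)
    (t : ℝ) (ht : 0 ≤ t) :
    (μ {ω | A ω + max (t - X ω - Y ω) 0 ≤ W ω ∧ W ω ≤ A ω + max (t - X ω) 0}).toReal ≥
      gmin * (lam / (lam + θ)) * Real.exp (-(θ * t)) / θ *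
        ∫ ω, (Real.exp (θ * min t (X ω + Y ω)) - Real.exp (θ * min t (X ω))) ∂μ := by
  classical
  -- measurable modification of A
  have hAne : NeZero (Measure.map A μ) := by
    constructor; rw [hA]
    exact (isProbabilityMeasure_expMeasure hlam).ne_zero
  have hAae : AEMeasurable A μ := aemeasurable_of_map_neZero hAne
  set A' := hAae.mk A with hA'def
  have hA'meas : Measurable A' := hAae.measurable_mk
  have hAA' : A =ᵐ[μ] A' := hAae.ae_eq_mk
  have hA' : Measure.map A' μ = expMeasure lam := by rw [← Measure.map_congr hAA', hA]
  have hA'pos : ∀ᵐ ω ∂μ, 0 ≤ A' ω := by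
    rw [ae_iff]
    have hset : {ω | ¬ 0 ≤ A' ω} = A' ⁻¹' (Iio 0) := by ext ω; simp [not_le]
    rw [hset, ← Measure.map_apply hA'meas measurableSet_Iio, hA']
    show MeasureTheory.volume.withDensity (gammaPDF 1 lam) (Iio 0) = 0
    rw [withDensity_apply _ measurableSet_Iio]
    exact lintegral_gammaPDF_of_nonpos le_rfl
  have hindep' : iIndepFun ![W, X, Y, A'] μ := by
    refine iIndepFun_ae_congr hindep ?_
    intro i; fin_cases i
    · exact Filter.EventuallyEq.rfl
    · exact Filter.EventuallyEq.rfl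
    · exact Filter.EventuallyEq.rfl
    · exact hAA'
  have hmeas4 : ∀ i, Measurable (![W, X, Y, A'] i) := by
    intro i; fin_cases i
    · exact hW
    · exact hX
    · exact hY
    · exact hA'meas
  -- independence facts
  have hZmeas : Measurable (fun ω => (X ω, Y ω, A' ω)) :=
    hX.prodMk (hY.prodMk hA'meas)
  have hWZ : IndepFun W (fun ω => (X ω, Y ω, A' ω)) μ := by
    have h := hindep'.indepFun_finset {0} {1,2,3} (by decide) hmeas4
    have h01 : (1 : Fin 4) ∈ ({1,2,3} : Finset (Fin 4)) := by decide
    have h02 : (2 : Fin 4) ∈ ({1,2,3} : Finset (Fin 4)) := by decide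
    have h03 : (3 : Fin 4) ∈ ({1,2,3} : Finset (Fin 4)) := by decide
    have h00 : (0 : Fin 4) ∈ ({0} : Finset (Fin 4)) := by decide
    exact h.comp (φ := fun v : (∀ i : ({0} : Finset (Fin 4)), ℝ) => v ⟨0, h00⟩)
      (ψ := fun v : (∀ i : ({1,2,3} : Finset (Fin 4)), ℝ) =>
        (v ⟨1, h01⟩, v ⟨2, h02⟩, v ⟨3, h03⟩))
      (measurable_pi_apply _)
      ((measurable_pi_apply _).prodMk ((measurable_pi_apply _).prodMk
        (measurable_pi_apply _)))
  have hXY_A : IndepFun (fun ω => (X ω, Y ω)) A' μ :=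
    hindep'.indepFun_prodMk hmeas4 1 2 3 (by decide) (by decide)
  -- the set S in the product space
  have hlo : Measurable (fun z : ℝ × ℝ × ℝ => z.2.2 + max (t - z.1 - z.2.1) 0) := by
    apply Measurable.add
    · exact measurable_snd.snd
    · exact ((measurable_const.sub measurable_fst).sub measurable_snd.fst).max measurable_const
  have hhi : Measurable (fun z : ℝ × ℝ × ℝ => z.2.2 + max (t - z.1) 0) := by
    apply Measurable.add
    · exact measurable_snd.snd
    · exact (measurable_const.sub measurable_fst).max measurable_const
  have hS : MeasurableSet {p : ℝ × (ℝ × ℝ × ℝ) |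
      p.2.2.2 + max (t - p.2.1 - p.2.2.1) 0 ≤ p.1 ∧ p.1 ≤ p.2.2.2 + max (t - p.2.1) 0} := by
    refine MeasurableSet.inter ?_ ?_
    · exact measurableSet_le (hlo.comp measurable_snd) measurable_fst
    · exact measurableSet_le measurable_fst (hhi.comp measurable_snd)
  -- probability instances on mapped measures
  haveI hPW : IsProbabilityMeasure (Measure.map W μ) := Measure.isProbabilityMeasure_map hW.aemeasurable
  haveI hPZ : IsProbabilityMeasure (Measure.map (fun ω => (X ω, Y ω, A' ω)) μ) :=
    Measure.isProbabilityMeasure_map hZmeas.aemeasurable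
  -- rewrite the event using A'
  have hev : μ {ω | A ω + max (t - X ω - Y ω) 0 ≤ W ω ∧ W ω ≤ A ω + max (t - X ω) 0}
      = μ ((fun ω => (W ω, (X ω, Y ω, A' ω))) ⁻¹' {p : ℝ × (ℝ × ℝ × ℝ) |
      p.2.2.2 + max (t - p.2.1 - p.2.2.1) 0 ≤ p.1 ∧ p.1 ≤ p.2.2.2 + max (t - p.2.1) 0}) := by
    refine measure_congr (Filter.eventuallyEq_set.2 (hAA'.mono fun ω hω => ?_))
    simp only [Set.mem_setOf_eq, Set.mem_preimage, hω]
  -- map to product measure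
  have hmapWZ : Measure.map (fun ω => (W ω, (X ω, Y ω, A' ω))) μ
      = (Measure.map W μ).prod (Measure.map (fun ω => (X ω, Y ω, A' ω)) μ) :=
    (indepFun_iff_map_prod_eq_prod_map_map hW.aemeasurable hZmeas.aemeasurable).mp hWZ
  have hμS : μ ((fun ω => (W ω, (X ω, Y ω, A' ω))) ⁻¹' {p : ℝ × (ℝ × ℝ × ℝ) |
      p.2.2.2 + max (t - p.2.1 - p.2.2.1) 0 ≤ p.1 ∧ p.1 ≤ p.2.2.2 + max (t - p.2.1) 0})
      = ∫⁻ z, (Measure.map W μ)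
          (Icc (z.2.2 + max (t - z.1 - z.2.1) 0) (z.2.2 + max (t - z.1) 0))
          ∂(Measure.map (fun ω => (X ω, Y ω, A' ω)) μ) := by
    rw [← Measure.map_apply (hW.prodMk hZmeas) hS, hmapWZ, Measure.prod_apply_symm hS]
    exact lintegral_congr fun z => rfl
  -- a.e. positivity on the mapped measure
  have hνpos : ∀ᵐ z ∂(Measure.map (fun ω => (X ω, Y ω, A' ω)) μ),
      0 ≤ z.2.1 ∧ 0 ≤ z.2.2 := by
    have hset : MeasurableSet {z : ℝ × ℝ × ℝ | 0 ≤ z.2.1 ∧ 0 ≤ z.2.2} := by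
      refine MeasurableSet.inter ?_ ?_
      · exact measurableSet_le measurable_const measurable_snd.fst
      · exact measurableSet_le measurable_const measurable_snd.snd
    rw [ae_map_iff hZmeas.aemeasurable hset]
    filter_upwards [hYpos, hA'pos] with ω h1 h2
    exact ⟨h1, h2⟩
  -- pointwise lower bound for the inner measure
  have hbound : ∫⁻ z, ENNReal.ofReal (gmin/θ *
        (Real.exp (-(θ * (z.2.2 + max (t - z.1 - z.2.1) 0)))
          - Real.exp (-(θ * (z.2.2 + max (t - z.1) 0)))))
        ∂(Measure.map (fun ω => (X ω, Y ω, A' ω)) μ)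
      ≤ ∫⁻ z, (Measure.map W μ)
          (Icc (z.2.2 + max (t - z.1 - z.2.1) 0) (z.2.2 + max (t - z.1) 0))
          ∂(Measure.map (fun ω => (X ω, Y ω, A' ω)) μ) := by
    refine lintegral_mono_ae (hνpos.mono fun z hz => ?_)
    have h1 : 0 ≤ z.2.2 + max (t - z.1 - z.2.1) 0 := add_nonneg hz.2 (le_max_right _ _)
    have h2 : z.2.2 + max (t - z.1 - z.2.1) 0 ≤ z.2.2 + max (t - z.1) 0 :=
      add_le_add le_rfl (max_le_max (by linarith [hz.1]) le_rfl)
    rw [hdensity]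
    exact withDensity_Icc_lower hgmin.le hθ hfW_bound h1 h2
  -- continuity / measurability of the bound function
  have hgcont : Continuous (fun z : ℝ × ℝ × ℝ => gmin/θ *
      (Real.exp (-(θ * (z.2.2 + max (t - z.1 - z.2.1) 0)))
        - Real.exp (-(θ * (z.2.2 + max (t - z.1) 0))))) := by
    fun_prop
  -- change variables back to Ω
  have hchg : ∫⁻ z, ENNReal.ofReal (gmin/θ *
        (Real.exp (-(θ * (z.2.2 + max (t - z.1 - z.2.1) 0)))
          - Real.exp (-(θ * (z.2.2 + max (t - z.1) 0)))))
        ∂(Measure.map (fun ω => (X ω, Y ω, A' ω)) μ)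
      = ∫⁻ ω, ENNReal.ofReal (gmin/θ *
          (Real.exp (-(θ * (A' ω + max (t - X ω - Y ω) 0)))
            - Real.exp (-(θ * (A' ω + max (t - X ω) 0))))) ∂μ := by
    rw [lintegral_map hgcont.measurable.ennreal_ofReal hZmeas]
  -- integrability of the bound function on Ω
  have hintG : Integrable (fun ω => gmin/θ *
      (Real.exp (-(θ * (A' ω + max (t - X ω - Y ω) 0)))
        - Real.exp (-(θ * (A' ω + max (t - X ω) 0))))) μ := by
    refine Integrable.mono' (integrable_const (gmin/θ))
      ((hgcont.measurable.comp hZmeas).aestronglyMeasurable) ?_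
    filter_upwards [hA'pos, hYpos] with ω h1 h2
    have e1le : Real.exp (-(θ * (A' ω + max (t - X ω - Y ω) 0))) ≤ 1 := by
      rw [Real.exp_le_one_iff]
      have : 0 ≤ A' ω + max (t - X ω - Y ω) 0 := add_nonneg h1 (le_max_right _ _)
      nlinarith
    have e2le : Real.exp (-(θ * (A' ω + max (t - X ω) 0))) ≤ 1 := by
      rw [Real.exp_le_one_iff]
      have : 0 ≤ A' ω + max (t - X ω) 0 := add_nonneg h1 (le_max_right _ _)
      nlinarith
    have e1pos := Real.exp_nonneg (-(θ * (A' ω + max (t - X ω - Y ω) 0)))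
    have e2pos := Real.exp_nonneg (-(θ * (A' ω + max (t - X ω) 0)))
    rw [Real.norm_eq_abs, abs_mul, abs_of_nonneg (by positivity : (0:ℝ) ≤ gmin/θ)]
    have habs : |Real.exp (-(θ * (A' ω + max (t - X ω - Y ω) 0)))
        - Real.exp (-(θ * (A' ω + max (t - X ω) 0)))| ≤ 1 :=
      abs_le.2 ⟨by linarith, by linarith⟩
    have := mul_le_mul_of_nonneg_left habs (by positivity : (0:ℝ) ≤ gmin/θ)
    linarith
  -- a.e. nonnegativity of the bound function
  have hGnn : 0 ≤ᵐ[μ] (fun ω => gmin/θ *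
      (Real.exp (-(θ * (A' ω + max (t - X ω - Y ω) 0)))
        - Real.exp (-(θ * (A' ω + max (t - X ω) 0))))) := by
    filter_upwards [hYpos] with ω h2
    have hle : A' ω + max (t - X ω - Y ω) 0 ≤ A' ω + max (t - X ω) 0 :=
      add_le_add le_rfl (max_le_max (by linarith) le_rfl)
    have := Real.exp_le_exp.2 (neg_le_neg (mul_le_mul_of_nonneg_left hle hθ.le))
    have hnn : (0:ℝ) ≤ gmin/θ := by positivity
    exact mul_nonneg hnn (by linarith)
  have hofReal : ∫⁻ ω, ENNReal.ofReal (gmin/θ *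
      (Real.exp (-(θ * (A' ω + max (t - X ω - Y ω) 0)))
        - Real.exp (-(θ * (A' ω + max (t - X ω) 0))))) ∂μ
      = ENNReal.ofReal (∫ ω, gmin/θ *
          (Real.exp (-(θ * (A' ω + max (t - X ω - Y ω) 0)))
            - Real.exp (-(θ * (A' ω + max (t - X ω) 0)))) ∂μ) :=
    (ofReal_integral_eq_lintegral_ofReal hintG hGnn).symm
  -- compute the ω-integral
  have hfact : (fun ω => gmin/θ *
      (Real.exp (-(θ * (A' ω + max (t - X ω - Y ω) 0)))
        - Real.exp (-(θ * (A' ω + max (t - X ω) 0)))))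
      = (fun ω => gmin/θ * (Real.exp (-(θ * A' ω)) *
          (Real.exp (-(θ * max (t - X ω - Y ω) 0))
            - Real.exp (-(θ * max (t - X ω) 0))))) := by
    funext ω
    simp only [mul_sub, ← Real.exp_add]
    ring_nf
  have hindepEH : IndepFun (fun ω => Real.exp (-(θ * A' ω)))
      (fun ω => Real.exp (-(θ * max (t - X ω - Y ω) 0))
        - Real.exp (-(θ * max (t - X ω) 0))) μ := by
    have hφ : Measurable (fun p : ℝ × ℝ => Real.exp (-(θ * max (t - p.1 - p.2) 0))
        - Real.exp (-(θ * max (t - p.1) 0))) := by fun_prop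
    have hψ : Measurable (fun a : ℝ => Real.exp (-(θ * a))) := by fun_prop
    exact (hXY_A.symm.comp hψ hφ)
  have hEint : ∫ ω, Real.exp (-(θ * A' ω)) ∂μ = lam/(lam+θ) := by
    have : ∫ ω, Real.exp (-(θ * A' ω)) ∂μ = ∫ a, Real.exp (-(θ * a)) ∂(Measure.map A' μ) :=
      (integral_map hA'meas.aemeasurable
        ((by fun_prop : Continuous fun a : ℝ => Real.exp (-(θ*a))).aestronglyMeasurable)).symm
    rw [this, hA']
    exact exp_moment hlam hθ
  have hmul : ∫ ω, Real.exp (-(θ * A' ω)) *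
      (Real.exp (-(θ * max (t - X ω - Y ω) 0)) - Real.exp (-(θ * max (t - X ω) 0))) ∂μ
      = (lam/(lam+θ)) * ∫ ω, (Real.exp (-(θ * max (t - X ω - Y ω) 0))
          - Real.exp (-(θ * max (t - X ω) 0))) ∂μ := by
    have hc1 : Continuous fun a : ℝ => Real.exp (-(θ*a)) := by fun_prop
    have hc2 : Continuous (fun p : ℝ × ℝ => Real.exp (-(θ * max (t - p.1 - p.2) 0))
        - Real.exp (-(θ * max (t - p.1) 0))) := by fun_prop
    have hm1 := (hc1.measurable.comp hA'meas).aestronglyMeasurable (μ := μ)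
    have hm2 := (hc2.measurable.comp (hX.prodMk hY)).aestronglyMeasurable (μ := μ)
    have h := hindepEH.integral_mul_eq_mul_integral hm1 hm2
    rw [hEint] at h
    exact h
  have hmaxmin : ∀ s : ℝ, max (t - s) 0 = t - min t s := by
    intro s
    rcases le_total s t with h | h
    · rw [min_eq_right h, max_eq_left (sub_nonneg.2 h)]
    · rw [min_eq_left h, max_eq_right (sub_nonpos.2 h), sub_self]
  have hHint : ∫ ω, (Real.exp (-(θ * max (t - X ω - Y ω) 0))
      - Real.exp (-(θ * max (t - X ω) 0))) ∂μ
      = Real.exp (-(θ*t)) *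
        ∫ ω, (Real.exp (θ * min t (X ω + Y ω)) - Real.exp (θ * min t (X ω))) ∂μ := by
    have e0 : (fun ω => Real.exp (-(θ * max (t - X ω - Y ω) 0))
        - Real.exp (-(θ * max (t - X ω) 0)))
        = fun ω => Real.exp (-(θ*t)) *
            (Real.exp (θ * min t (X ω + Y ω)) - Real.exp (θ * min t (X ω))) := by
      funext ω
      have e1 : t - X ω - Y ω = t - (X ω + Y ω) := by ring
      rw [e1, hmaxmin (X ω + Y ω), hmaxmin (X ω)]
      simp only [mul_sub, ← Real.exp_add]
      ring_nf
    rw [e0, MeasureTheory.integral_const_mul]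
  -- assemble everything
  have hkey : ENNReal.ofReal (gmin * (lam / (lam + θ)) * Real.exp (-(θ * t)) / θ *
        ∫ ω, (Real.exp (θ * min t (X ω + Y ω)) - Real.exp (θ * min t (X ω))) ∂μ)
      ≤ μ {ω | A ω + max (t - X ω - Y ω) 0 ≤ W ω ∧ W ω ≤ A ω + max (t - X ω) 0} := by
    rw [hev, hμS]
    refine le_trans (le_of_eq ?_) hbound
    rw [hchg, hofReal]
    congr 1
    rw [hfact, MeasureTheory.integral_const_mul, hmul, hHint]
    ring
  have hne : μ {ω | A ω + max (t - X ω - Y ω) 0 ≤ W ω ∧ W ω ≤ A ω + max (t - X ω) 0} ≠ ⊤ :=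
    measure_ne_top μ _
  exact (ENNReal.ofReal_le_iff_le_toReal hne).mp hkey
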